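/- For fixed k ≥ 1 and φ > 0, the ratio S(n, k-1, φ)/S(n, k, φ) tends to 0 as n → ∞. -/

import Mathlib

open Finset Filter Real

/-- Central Stirling numbers of the second kind. -/
def stirling2 : ℕ → ℕ → ℕ
  | 0, 0 => 1
  | 0, _ + 1 => 0
  | _ + 1, 0 => 0
  | n + 1, k + 1 => (k + 1) * stirling2 n (k + 1) + stirling2 n k

/-- Noncentral Stirling numbers of the second kind. -/
noncomputable def ncS (n k : ℕ) (φ : ℝ) : ℝ :=
  ∑ j ∈ Finset.range (n + 1), (n.choose j : ℝ) * φ ^ (n - j) * (stirling2 j k : ℝ)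

/-- Spillage mass function. -/
noncomputable def spillage (r n k : ℕ) (φ : ℝ) : ℝ :=
  (n.choose (k + r) : ℝ) * φ ^ (n - k - r) * (stirling2 (k + r) k : ℝ) / ncS n k φ

lemma stirling2_succ_zero (n : ℕ) : stirling2 (n+1) 0 = 0 := rfl
lemma stirling2_zero_succ (k : ℕ) : stirling2 0 (k+1) = 0 := rfl
lemma stirling2_rec (n k : ℕ) :
    stirling2 (n+1) (k+1) = (k + 1) * stirling2 n (k + 1) + stirling2 n k := rfl

lemma stirling2_eq_zero_of_lt : ∀ {n k : ℕ}, n < k → stirling2 n k = 0 := by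
  intro n
  induction n with
  | zero => intro k hk; match k, hk with | k+1, _ => rfl
  | succ n ih =>
    intro k hk
    match k, hk with
    | k+1, hk =>
      rw [stirling2_rec, ih (by omega), ih (by omega)]
      simp

lemma stirling2_self : ∀ n : ℕ, stirling2 n n = 1 := by
  intro n
  induction n with
  | zero => rfl
  | succ n ih =>
    rw [stirling2_rec, ih, stirling2_eq_zero_of_lt (by omega)]
    simp

lemma ncS_zero_right (n : ℕ) (φ : ℝ) : ncS n 0 φ = φ ^ n := by
  unfold ncS
  rw [Finset.sum_range_succ']
  have h1 : ∀ i ∈ Finset.range n, (n.choose (i+1) : ℝ) * φ ^ (n - (i+1)) * (stirling2 (i+1) 0 : ℝ) = 0 := by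
    intro i _; rw [stirling2_succ_zero]; simp
  rw [Finset.sum_congr rfl h1]
  simp [stirling2]

lemma ncS_rec (n k : ℕ) (φ : ℝ) :
    ncS (n+1) (k+1) φ = (k + 1 + φ) * ncS n (k+1) φ + ncS n k φ := by
  unfold ncS
  rw [Finset.sum_range_succ']
  have e0 : ((n+1).choose 0 : ℝ) * φ ^ (n + 1 - 0) * (stirling2 0 (k+1) : ℝ) = 0 := by
    rw [stirling2_zero_succ]; simp
  rw [e0, add_zero]
  have e1 : ∀ i ∈ Finset.range (n+1),
      ((n+1).choose (i+1) : ℝ) * φ ^ (n + 1 - (i+1)) * (stirling2 (i+1) (k+1) : ℝ)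
      = ((n.choose i : ℝ) * φ ^ (n - i) * (stirling2 i (k+1) : ℝ)) * (k+1)
        + (n.choose i : ℝ) * φ ^ (n - i) * (stirling2 i k : ℝ)
        + ((n.choose (i+1) : ℝ) * φ ^ (n + 1 - (i+1)) * (stirling2 (i+1) (k+1) : ℝ)) := by
    intro i _
    rw [Nat.choose_succ_succ, stirling2_rec]
    push_cast
    simp only [Nat.succ_eq_add_one, Nat.add_sub_cancel, Nat.succ_sub_succ]
    ring
  rw [Finset.sum_congr rfl e1, Finset.sum_add_distrib, Finset.sum_add_distrib,
    ← Finset.sum_mul]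
  -- now handle the shifted sum T = ∑_{i∈range(n+1)} C(n,i+1) φ^{n+1-(i+1)} S(i+1,k+1)
  have hT : ∑ i ∈ Finset.range (n+1),
      (n.choose (i+1) : ℝ) * φ ^ (n + 1 - (i+1)) * (stirling2 (i+1) (k+1) : ℝ)
      = φ * ∑ j ∈ Finset.range (n+1), (n.choose j : ℝ) * φ ^ (n - j) * (stirling2 j (k+1) : ℝ) := by
    have := Finset.sum_range_succ' (fun j => (n.choose j : ℝ) * φ ^ (n + 1 - j) * (stirling2 j (k+1) : ℝ)) (n+1)
    -- LHS of `this` : ∑_{j ∈ range(n+2)}, RHS: ∑_{i∈range(n+1)} f(i+1) + f 0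
    rw [Finset.sum_range_succ] at this
    have hz : (n.choose (n+1) : ℝ) * φ ^ (n + 1 - (n+1)) * (stirling2 (n+1) (k+1) : ℝ) = 0 := by
      rw [Nat.choose_succ_self]; simp
    have hz0 : (n.choose 0 : ℝ) * φ ^ (n + 1 - 0) * (stirling2 0 (k+1) : ℝ) = 0 := by
      rw [stirling2_zero_succ]; simp
    rw [hz, add_zero, hz0, add_zero] at this
    rw [← this, Finset.mul_sum]
    apply Finset.sum_congr rfl
    intro j hj
    have hj' : j ≤ n := by simpa [Nat.lt_succ_iff] using Finset.mem_range.mp hj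
    have : n + 1 - j = (n - j) + 1 := by omega
    rw [this, pow_succ]
    ring
  rw [hT]
  ring

lemma ncS_nonneg (n k : ℕ) {φ : ℝ} (hφ : 0 ≤ φ) : 0 ≤ ncS n k φ := by
  apply Finset.sum_nonneg
  intro j _
  positivity

lemma ncS_ge {k : ℕ} {φ : ℝ} (hφ : 0 < φ) : ∀ n, k ≤ n → ((k:ℝ) + φ) ^ (n - k) ≤ ncS n k φ := by
  intro n
  induction n with
  | zero =>
    intro hn
    interval_cases k
    simp [ncS_zero_right]
  | succ n ih =>
    intro hn
    rcases Nat.lt_or_ge n k with h | h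
    · -- n + 1 = k
      have hk : k = n + 1 := by omega
      subst hk
      simp only [Nat.sub_self, pow_zero]
      unfold ncS
      rw [Finset.sum_range_succ]
      have : (1:ℝ) ≤ ((n+1).choose (n+1) : ℝ) * φ ^ (n + 1 - (n+1)) * (stirling2 (n+1) (n+1) : ℝ) := by
        rw [Nat.choose_self, stirling2_self]; simp
      have hnn : 0 ≤ ∑ j ∈ Finset.range (n+1), ((n+1).choose j : ℝ) * φ ^ (n + 1 - j) * (stirling2 j (n+1) : ℝ) := by
        apply Finset.sum_nonneg; intro j _; positivity
      linarith
    · rcases Nat.eq_zero_or_pos k with hk0 | hk0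
      · subst hk0
        rw [ncS_zero_right]
        norm_num
      · obtain ⟨m, rfl⟩ : ∃ m, k = m + 1 := ⟨k - 1, by omega⟩
        rw [ncS_rec]
        have h1 : (((m+1:ℕ):ℝ) + φ) ^ (n - (m+1)) ≤ ncS n (m+1) φ := ih h
        push_cast at h1 ⊢
        have h2 : 0 ≤ ncS n m φ := ncS_nonneg n m hφ.le
        have he : n - m = (n - (m+1)) + 1 := by omega
        rw [he, pow_succ]
        have hpos : (0:ℝ) < (m:ℝ) + 1 + φ := by positivity
        nlinarith [pow_nonneg hpos.le (n - (m+1))]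

lemma ncS_le {φ : ℝ} (hφ : 0 < φ) : ∀ n m : ℕ, ncS n m φ ≤ ((n:ℝ)+1) ^ m * ((m:ℝ) + φ) ^ n := by
  intro n
  induction n with
  | zero =>
    intro m
    unfold ncS
    rcases Nat.eq_zero_or_pos m with rfl | hm
    · simp [stirling2]
    · obtain ⟨m', rfl⟩ : ∃ m', m = m' + 1 := ⟨m - 1, by omega⟩
      simp [stirling2_zero_succ]
  | succ n ih =>
    intro m
    rcases Nat.eq_zero_or_pos m with rfl | hm
    · rw [ncS_zero_right]
      push_cast
      calc φ ^ (n+1) = ((0:ℝ) + φ) ^ (n+1) := by norm_num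
        _ ≤ ((n:ℝ)+1+1) ^ 0 * ((0:ℝ) + φ) ^ (n+1) := by simp
    · obtain ⟨m', rfl⟩ : ∃ m', m = m' + 1 := ⟨m - 1, by omega⟩
      rw [ncS_rec]
      have h1 := ih (m' + 1)
      have h2 := ih m'
      push_cast at h1 h2 ⊢
      have hn0 : (0:ℝ) ≤ (n:ℝ) := Nat.cast_nonneg n
      have hm0 : (0:ℝ) ≤ (m':ℝ) := Nat.cast_nonneg m'
      have hb : ((m':ℝ) + φ) ^ n ≤ ((m':ℝ) + 1 + φ) ^ (n+1) := by
        calc ((m':ℝ) + φ) ^ n ≤ ((m':ℝ) + 1 + φ) ^ n := by gcongr <;> linarith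
          _ ≤ ((m':ℝ) + 1 + φ) ^ (n+1) := by
              apply pow_le_pow_right₀ (by linarith) (by omega)
      have e1 : ((m':ℝ)+1+φ) * (((n:ℝ)+1) ^ (m'+1) * ((m':ℝ)+1+φ)^n)
          = ((n:ℝ)+1) ^ (m'+1) * ((m':ℝ)+1+φ)^(n+1) := by rw [pow_succ]; ring
      have e2 : ((n:ℝ)+1)^m' * ((m':ℝ)+φ)^n ≤ ((n:ℝ)+1)^m' * ((m':ℝ)+1+φ)^(n+1) :=
        mul_le_mul_of_nonneg_left hb (by positivity)
      have e3 : ((n:ℝ)+1) ^ (m'+1) * ((m':ℝ)+1+φ)^(n+1) + ((n:ℝ)+1)^m' * ((m':ℝ)+1+φ)^(n+1)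
          ≤ ((n:ℝ)+1+1) ^ (m'+1) * ((m':ℝ)+1+φ)^(n+1) := by
        have hpm : ((n:ℝ)+1) ^ (m'+1) + ((n:ℝ)+1)^m' ≤ ((n:ℝ)+1+1) ^ (m'+1) := by
          have hx : ((n:ℝ)+1) ^ (m'+1) + ((n:ℝ)+1)^m' = (((n:ℝ)+1)+1) * ((n:ℝ)+1)^m' := by
            rw [pow_succ]; ring
          have hy : (((n:ℝ)+1)) ^ m' ≤ ((n:ℝ)+1+1) ^ m' := by gcongr <;> linarith
          rw [hx, pow_succ]
          nlinarith [pow_nonneg (by positivity : (0:ℝ) ≤ (n:ℝ)+1) m']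
        nlinarith [pow_nonneg (by positivity : (0:ℝ) ≤ (m':ℝ)+1+φ) (n+1)]
      have hA : ((m':ℝ)+1+φ) * ncS n (m'+1) φ ≤ ((m':ℝ)+1+φ) * (((n:ℝ)+1) ^ (m'+1) * ((m':ℝ)+1+φ)^n) :=
        mul_le_mul_of_nonneg_left h1 (by positivity)
      linarith

theorem stmt11 (k : ℕ) (hk : 1 ≤ k) (φ : ℝ) (hφ : 0 < φ) :
    Filter.Tendsto (fun n : ℕ => ncS n (k - 1) φ / ncS n k φ)
      Filter.atTop (nhds 0) := by
  obtain ⟨m, rfl⟩ : ∃ m, k = m + 1 := ⟨k - 1, by omega⟩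
  simp only [Nat.add_sub_cancel]
  have hm0 : (0:ℝ) ≤ (m:ℝ) := Nat.cast_nonneg m
  set a : ℝ := (m:ℝ) + φ with ha
  set b : ℝ := (m:ℝ) + 1 + φ with hb
  have ha0 : 0 < a := by rw [ha]; linarith
  have hb0 : 0 < b := by rw [hb]; linarith
  have hab : a < b := by rw [ha, hb]; linarith
  have hr1 : a / b < 1 := (div_lt_one hb0).mpr hab
  have hr0 : 0 ≤ a / b := by positivity
  have htend : Tendsto (fun n : ℕ => (b^(m+1) * 2^m) * ((n:ℝ)^m * (a/b)^n)) atTop (nhds 0) := by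
    have h1 := tendsto_pow_const_mul_const_pow_of_lt_one m hr0 hr1
    simpa using h1.const_mul (b^(m+1) * 2^m)
  apply squeeze_zero' (g := fun n : ℕ => (b^(m+1) * 2^m) * ((n:ℝ)^m * (a/b)^n)) _ _ htend
  · filter_upwards [eventually_atTop.mpr ⟨m+2, fun n hn => hn⟩] with n hn
    have hD : (0:ℝ) < ncS n (m+1) φ := by
      calc (0:ℝ) < b ^ (n - (m+1)) := pow_pos hb0 _
        _ ≤ ncS n (m+1) φ := by
            have := ncS_ge (k := m+1) hφ n (by omega)
            push_cast at this
            exact this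
    exact div_nonneg (ncS_nonneg n m hφ.le) hD.le
  · filter_upwards [eventually_atTop.mpr ⟨m+2, fun n hn => hn⟩] with n hn
    have hDl : b ^ (n - (m+1)) ≤ ncS n (m+1) φ := by
      have := ncS_ge (k := m+1) hφ n (by omega)
      push_cast at this
      exact this
    have hD : (0:ℝ) < ncS n (m+1) φ := lt_of_lt_of_le (pow_pos hb0 _) hDl
    have hN : ncS n m φ ≤ ((n:ℝ)+1)^m * a^n := ncS_le hφ n m
    have step1 : ncS n m φ / ncS n (m+1) φ ≤ (((n:ℝ)+1)^m * a^n) / b ^ (n - (m+1)) :=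
      div_le_div₀ (by positivity) hN (pow_pos hb0 _) hDl
    have step2 : (((n:ℝ)+1)^m * a^n) / b ^ (n - (m+1))
        = b^(m+1) * (((n:ℝ)+1)^m * (a/b)^n) := by
      rw [pow_sub₀ b hb0.ne' (by omega : m+1 ≤ n), div_pow]
      have hbn : b ^ n ≠ 0 := by positivity
      have hbm : b ^ (m+1) ≠ 0 := by positivity
      field_simp
    have step3 : b^(m+1) * (((n:ℝ)+1)^m * (a/b)^n)
        ≤ (b^(m+1) * 2^m) * ((n:ℝ)^m * (a/b)^n) := by
      have hn1 : (1:ℝ) ≤ (n:ℝ) := by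
        have : (1:ℕ) ≤ n := by omega
        exact_mod_cast this
      have hp : ((n:ℝ)+1)^m ≤ (2*(n:ℝ))^m := by
        apply pow_le_pow_left₀ (by linarith) (by linarith)
      have : ((n:ℝ)+1)^m * (a/b)^n ≤ 2^m * ((n:ℝ)^m * (a/b)^n) := by
        rw [mul_pow] at hp
        have := mul_le_mul_of_nonneg_right hp (pow_nonneg hr0 n)
        linarith
      have hbp : (0:ℝ) ≤ b^(m+1) := by positivity
      calc b^(m+1) * (((n:ℝ)+1)^m * (a/b)^n) ≤ b^(m+1) * (2^m * ((n:ℝ)^m * (a/b)^n)) :=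
            mul_le_mul_of_nonneg_left this hbp
        _ = (b^(m+1) * 2^m) * ((n:ℝ)^m * (a/b)^n) := by ring
    calc ncS n m φ / ncS n (m+1) φ ≤ (((n:ℝ)+1)^m * a^n) / b ^ (n - (m+1)) := step1
      _ = b^(m+1) * (((n:ℝ)+1)^m * (a/b)^n) := step2
      _ ≤ (b^(m+1) * 2^m) * ((n:ℝ)^m * (a/b)^n) := step3
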